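/- arXiv:1610.04829 — 2 statements merged into one kernel-verified Lean document; each statement's English description precedes it below -/
import Mathlib

section
/- Let Γ be a set, let K be a convex compact subset of [0,1]^Γ, let L be a compact zero-dimensional Hausdorff space, and let 𝒢 be a family of clopen subsets of L which is isomorphic to a family of pseudoclopens of K. Then there is a countable decomposition 𝒢 = ⋃_{n<ω} 𝒢ₙ such that for every x, y ∈ L and every n < ω there exists a further finite decomposition 𝒢ₙ = ⋃_{m=0}^{n} 𝒢ₙₘ such that for every m ≤ n and every partition 𝒢ₙₘ = ℱ ∪ ℋ into disjoint pieces with ℱ ⊇ {a ∈ 𝒢ₙₘ : x,y ∈ a} and ℋ ⊇ {a ∈ 𝒢ₙₘ : x,y ∉ a}, one has ⋂ℱ \ ⋃ℋ ≠ ∅. In particular, for every m ≤ n the family 𝒢ₙₘ(x,y) of those a ∈ 𝒢ₙₘ that contain exactly one of x, y is independent. -/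
open Set

/-- `φ` is an isomorphism of the family `𝒢` of subsets of `X` with a family of
pseudoclopens of the topological space `K`: `φ` is injective on `𝒢`, each `φ a`
is a pseudoclopen (a pair of a closed set contained in an open set), and for all
finite disjoint `F, H ⊆ 𝒢` (i.e. pairwise distinct `a₁,…,aₙ,b₁,…,bₘ ∈ 𝒢`) the
two implications between vanishing of `⋂ F \ ⋃ H` and of the corresponding
combinations of the pseudoclopens hold. -/
def IsPseudoclopenIso {X K : Type*} [TopologicalSpace K]
    (𝒢 : Set (Set X)) (φ : Set X → Set K × Set K) : Prop :=
  Set.InjOn φ 𝒢 ∧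
  (∀ a ∈ 𝒢, IsClosed (φ a).1 ∧ IsOpen (φ a).2 ∧ (φ a).1 ⊆ (φ a).2) ∧
  ∀ F H : Set (Set X), F.Finite → H.Finite → F ⊆ 𝒢 → H ⊆ 𝒢 → Disjoint F H →
    ((⋂₀ F \ ⋃₀ H = ∅ → (⋂ a ∈ F, (φ a).2) \ (⋃ a ∈ H, (φ a).1) = ∅) ∧
     ((⋂ a ∈ F, (φ a).1) \ (⋃ a ∈ H, (φ a).2) = ∅ → ⋂₀ F \ ⋃₀ H = ∅))

/-- A family of sets is independent: every finite Boolean configuration is nonempty. -/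
def IndepFamily {X : Type*} (𝒢 : Set (Set X)) : Prop :=
  ∀ F H : Set (Set X), F.Finite → H.Finite → F ⊆ 𝒢 → H ⊆ 𝒢 → Disjoint F H →
    (⋂₀ F \ ⋃₀ H).Nonempty

/-- decomposition theorem for families of clopens isomorphic to
pseudoclopens of a convex compact subset of `[0,1]^Γ`. -/
theorem countable_decomposition_of_convex {Γ : Type*} (K : Set (Γ → ℝ))
    (hsub : ∀ x ∈ K, ∀ γ, x γ ∈ Set.Icc (0:ℝ) 1)
    (hconv : Convex ℝ K) (hcomp : IsCompact K)
    {L : Type*} [TopologicalSpace L] [CompactSpace L] [T2Space L]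
    [TotallyDisconnectedSpace L]
    (𝒢 : Set (Set L)) (h𝒢 : ∀ a ∈ 𝒢, IsClopen a)
    (φ : Set L → Set ↥K × Set ↥K) (hφ : IsPseudoclopenIso 𝒢 φ) :
    ∃ G : ℕ → Set (Set L), (⋃ n, G n) = 𝒢 ∧
      ∀ x y : L, ∀ n : ℕ, ∃ Gm : ℕ → Set (Set L), (⋃ m ≤ n, Gm m) = G n ∧
        ∀ m ≤ n,
          (∀ F H : Set (Set L), F ∪ H = Gm m → Disjoint F H →
            {a ∈ Gm m | x ∈ a ∧ y ∈ a} ⊆ F → {a ∈ Gm m | x ∉ a ∧ y ∉ a} ⊆ H →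
            (⋂₀ F \ ⋃₀ H).Nonempty) ∧
          IndepFamily {a ∈ Gm m | (x ∈ a ∧ y ∉ a) ∨ (y ∈ a ∧ x ∉ a)} := by
  classical
  obtain ⟨hinj, hpc, hiso⟩ := hφ
  haveI hKcs : CompactSpace ↥K := isCompact_iff_compactSpace.mp hcomp
  set G : ℕ → Set (Set L) := fun n => {a | a ∈ 𝒢 ∧ ∀ u ∈ (φ a).1, ∀ v ∈ ((φ a).2)ᶜ,
      ∃ γ, (1:ℝ)/((n:ℝ)+1) ≤ |(u : Γ → ℝ) γ - (v : Γ → ℝ) γ|} with hG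
  refine ⟨G, ?_, ?_⟩
  · apply Set.Subset.antisymm
    · exact Set.iUnion_subset fun n a ha => ha.1
    · intro a ha
      set W : ℕ → Set (↥K × ↥K) := fun k =>
        ⋃ γ : Γ, {uv : ↥K × ↥K | (1:ℝ)/((k:ℝ)+1) < |(uv.1 : Γ → ℝ) γ - (uv.2 : Γ → ℝ) γ|}
        with hW
      have hWo : ∀ k, IsOpen (W k) := by
        intro k
        refine isOpen_iUnion fun γ => ?_
        have hc : Continuous fun uv : ↥K × ↥K =>
            |(uv.1 : Γ → ℝ) γ - (uv.2 : Γ → ℝ) γ| :=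
          (((continuous_apply γ).comp (continuous_subtype_val.comp continuous_fst)).sub
            ((continuous_apply γ).comp (continuous_subtype_val.comp continuous_snd))).abs
        exact isOpen_lt continuous_const hc
      have hCc : IsCompact ((φ a).1 ×ˢ ((φ a).2)ᶜ) :=
        ((hpc a ha).1.isCompact).prod (((hpc a ha).2.1).isClosed_compl.isCompact)
      have hcover : (φ a).1 ×ˢ ((φ a).2)ᶜ ⊆ ⋃ k, W k := by
        rintro ⟨u, v⟩ ⟨hu, hv⟩
        have huv : (u : Γ → ℝ) ≠ (v : Γ → ℝ) := by
          intro h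
          exact hv (by rw [show v = u from Subtype.ext h.symm]; exact (hpc a ha).2.2 hu)
        obtain ⟨γ, hγ⟩ := Function.ne_iff.mp huv
        obtain ⟨k, hk⟩ := exists_nat_one_div_lt (abs_pos.mpr (sub_ne_zero.mpr hγ))
        refine mem_iUnion.mpr ⟨k, mem_iUnion.mpr ⟨γ, ?_⟩⟩
        simpa using hk
      obtain ⟨t, ht⟩ := hCc.elim_finite_subcover W hWo hcover
      refine mem_iUnion.mpr ⟨t.sup id, ha, ?_⟩
      intro u hu v hv
      have hmem := ht (Set.mk_mem_prod hu hv)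
      rw [Set.mem_iUnion₂] at hmem
      obtain ⟨k, hkt, hkW⟩ := hmem
      rw [hW, Set.mem_iUnion] at hkW
      obtain ⟨γ, hγ⟩ := hkW
      refine ⟨γ, le_trans ?_ (le_of_lt hγ)⟩
      have hkN : (k:ℝ) + 1 ≤ ((t.sup id : ℕ):ℝ) + 1 := by
        have : k ≤ t.sup id := Finset.le_sup (f := id) hkt
        exact_mod_cast Nat.succ_le_succ this
      exact one_div_le_one_div_of_le (by positivity) hkN
  · intro x y n
    set δ : ℝ := 1/((n:ℝ)+1) with hδ
    have δpos : 0 < δ := by positivity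
    have hδ1 : ((n:ℝ)+1) * δ = 1 := by rw [hδ]; field_simp
    -- K is nonempty
    have hKne : Nonempty ↥K := by
      rcases isEmpty_or_nonempty ↥K with hK | hK
      · exfalso
        have h2 := (hiso ∅ ∅ finite_empty finite_empty (empty_subset _) (empty_subset _)
          (by simp)).2
        have hempty : (⋂ a ∈ (∅ : Set (Set L)), (φ a).1) \ (⋃ a ∈ (∅ : Set (Set L)), (φ a).2)
            = ∅ := Set.eq_empty_of_isEmpty _
        have h3 := h2 hempty
        simp only [Set.sInter_empty, Set.sUnion_empty, Set.diff_empty] at h3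
        exact (Set.univ_eq_empty_iff.mp h3).false x
      · exact hK
    -- realize points of L inside K
    have hpoint : ∀ w : L, ∃ p : ↥K, ∀ a ∈ 𝒢, (w ∈ a → p ∈ (φ a).1) ∧ (w ∉ a → p ∉ (φ a).2) := by
      intro w
      set Z : ↥𝒢 → Set ↥K := fun i => if w ∈ (i : Set L) then (φ i).1 else ((φ i).2)ᶜ with hZ
      have hZc : ∀ i, IsClosed (Z i) := by
        intro i
        by_cases hw : w ∈ (i : Set L)
        · simpa [hZ, hw] using (hpc i i.2).1
        · simpa [hZ, hw] using ((hpc i i.2).2.1).isClosed_compl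
      have hne : (Set.univ ∩ ⋂ i, Z i).Nonempty := by
        rw [Set.nonempty_iff_ne_empty]
        intro hemp
        obtain ⟨t, ht⟩ := isCompact_univ.elim_finite_subfamily_closed Z hZc hemp
        set F : Set (Set L) := Subtype.val '' {i : ↥𝒢 | i ∈ t ∧ w ∈ (i : Set L)} with hF
        set H : Set (Set L) := Subtype.val '' {i : ↥𝒢 | i ∈ t ∧ w ∉ (i : Set L)} with hH
        have hFfin : F.Finite := ((t.finite_toSet.subset (fun i hi => hi.1)).image _)
        have hHfin : H.Finite := ((t.finite_toSet.subset (fun i hi => hi.1)).image _)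
        have hFsub : F ⊆ 𝒢 := by rintro s ⟨i, _, rfl⟩; exact i.2
        have hHsub : H ⊆ 𝒢 := by rintro s ⟨i, _, rfl⟩; exact i.2
        have hdisj : Disjoint F H := by
          rw [Set.disjoint_left]
          rintro s ⟨i, hi, rfl⟩ ⟨j, hj, hji⟩
          exact hj.2 (by rw [hji]; exact hi.2)
        have hwmem : w ∈ ⋂₀ F \ ⋃₀ H := by
          constructor
          · intro s hs
            obtain ⟨i, hi, rfl⟩ := hs
            exact hi.2
          · rintro ⟨s, hs, hws⟩
            obtain ⟨i, hi, rfl⟩ := hs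
            exact hi.2 hws
        have h2 := (hiso F H hFfin hHfin hFsub hHsub hdisj).2
        have hKne' : ((⋂ a ∈ F, (φ a).1) \ ⋃ a ∈ H, (φ a).2).Nonempty := by
          rw [Set.nonempty_iff_ne_empty]
          intro h0
          rw [h2 h0] at hwmem
          exact hwmem
        obtain ⟨z0, hz01, hz02⟩ := hKne'
        have hzmem : z0 ∈ Set.univ ∩ ⋂ i ∈ t, Z i := by
          refine ⟨trivial, ?_⟩
          rw [Set.mem_iInter₂]
          intro i hit
          by_cases hw : w ∈ (i : Set L)
          · have hiF : (i : Set L) ∈ F := ⟨i, ⟨hit, hw⟩, rfl⟩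
            simp only [hZ, if_pos hw]
            exact (Set.mem_iInter₂.mp hz01) _ hiF
          · have hiH : (i : Set L) ∈ H := ⟨i, ⟨hit, hw⟩, rfl⟩
            simp only [hZ, if_neg hw]
            intro hmem
            exact hz02 (Set.mem_iUnion₂.mpr ⟨_, hiH, hmem⟩)
        rw [ht] at hzmem
        exact hzmem
      obtain ⟨p, hp⟩ := hne
      refine ⟨p, fun a ha => ⟨fun hw => ?_, fun hw hmem => ?_⟩⟩
      · have := Set.mem_iInter.mp hp.2 ⟨a, ha⟩
        simpa [hZ, hw] using this
      · have := Set.mem_iInter.mp hp.2 ⟨a, ha⟩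
        simp only [hZ, if_neg hw] at this
        exact this hmem
    obtain ⟨p, hp⟩ := hpoint x
    obtain ⟨q, hq⟩ := hpoint y
    -- the segment from p to q
    set seg : ℝ → Γ → ℝ := fun t γ => (1-t) * (p : Γ → ℝ) γ + t * (q : Γ → ℝ) γ with hsegdef
    have hseg_mem : ∀ t ∈ Icc (0:ℝ) 1, seg t ∈ K := by
      intro t ht
      have h := hconv p.2 q.2 (by linarith [ht.2] : (0:ℝ) ≤ 1 - t) ht.1 (by ring)
      have e : seg t = (1-t) • (p : Γ → ℝ) + t • (q : Γ → ℝ) := by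
        funext γ
        simp [hsegdef, Pi.add_apply, Pi.smul_apply, smul_eq_mul]
      rw [e]
      exact h
    set z : ℝ → ↥K := fun t => if h : seg t ∈ K then ⟨seg t, h⟩ else p with hzdef
    have hz_coe : ∀ t ∈ Icc (0:ℝ) 1, ((z t : ↥K) : Γ → ℝ) = seg t := by
      intro t ht
      simp [hzdef, hseg_mem t ht]
    have hmem01 : (0:ℝ) ∈ Icc (0:ℝ) 1 := by constructor <;> norm_num
    have hmem11 : (1:ℝ) ∈ Icc (0:ℝ) 1 := by constructor <;> norm_num
    have hz0 : z 0 = p := by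
      apply Subtype.ext
      rw [hz_coe 0 hmem01]
      funext γ; simp [hsegdef]
    have hz1 : z 1 = q := by
      apply Subtype.ext
      rw [hz_coe 1 hmem11]
      funext γ; simp [hsegdef]
    -- separation along the segment
    have hsep : ∀ a ∈ G n, ∀ s ∈ Icc (0:ℝ) 1, ∀ t ∈ Icc (0:ℝ) 1,
        z s ∈ (φ a).1 → z t ∉ (φ a).2 → δ ≤ |s - t| := by
      intro a ha s hs t ht h1 h2
      obtain ⟨γ, hγ⟩ := ha.2 (z s) h1 (z t) h2
      rw [← hδ] at hγ
      have e : (z s : Γ → ℝ) γ - (z t : Γ → ℝ) γ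
          = (s - t) * ((q : Γ → ℝ) γ - (p : Γ → ℝ) γ) := by
        rw [hz_coe s hs, hz_coe t ht]
        simp only [hsegdef]
        ring
      have hb : |(q : Γ → ℝ) γ - (p : Γ → ℝ) γ| ≤ 1 := by
        have h1' := hsub _ p.2 γ
        have h2' := hsub _ q.2 γ
        simp only [mem_Icc] at h1' h2'
        rw [abs_le]; constructor <;> linarith
      calc δ ≤ |(z s : Γ → ℝ) γ - (z t : Γ → ℝ) γ| := hγ
        _ = |s - t| * |(q : Γ → ℝ) γ - (p : Γ → ℝ) γ| := by rw [e, abs_mul]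
        _ ≤ |s - t| * 1 := mul_le_mul_of_nonneg_left hb (abs_nonneg _)
        _ = |s - t| := mul_one _
    -- crossing-time functions
    set SS : Set L → Set ℝ := fun a => {t | t ∈ Icc (0:ℝ) 1 ∧ z t ∉ (φ a).2} with hSSdef
    set U : Set L → ℝ := fun a => sInf (SS a) with hUdef
    set V : Set L → ℝ := fun a => sSup (SS a) with hVdef
    have hSSbb : ∀ a, BddBelow (SS a) := fun a => ⟨0, fun t ht => ht.1.1⟩
    have hSSba : ∀ a, BddAbove (SS a) := fun a => ⟨1, fun t ht => ht.1.2⟩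
    have hSX : ∀ a ∈ 𝒢, y ∉ a → (1:ℝ) ∈ SS a := by
      intro a ha hy
      exact ⟨hmem11, by rw [hz1]; exact (hq a ha).2 hy⟩
    have hSY : ∀ a ∈ 𝒢, x ∉ a → (0:ℝ) ∈ SS a := by
      intro a ha hx
      exact ⟨hmem01, by rw [hz0]; exact (hp a ha).2 hx⟩
    have hUge : ∀ a ∈ G n, x ∈ a → y ∉ a → δ ≤ U a := by
      intro a ha hx hy
      refine le_csInf ⟨1, hSX a ha.1 hy⟩ ?_
      intro t ht
      have := hsep a ha 0 hmem01 t ht.1 (by rw [hz0]; exact (hp a ha.1).1 hx) ht.2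
      rw [zero_sub, abs_neg, abs_of_nonneg ht.1.1] at this
      exact this
    have hUle1 : ∀ a ∈ 𝒢, y ∉ a → U a ≤ 1 := fun a ha hy => csInf_le (hSSbb a) (hSX a ha hy)
    have hX3 : ∀ a, ∀ t ∈ Icc (0:ℝ) 1, t < U a → z t ∈ (φ a).2 := by
      intro a t ht hlt
      by_contra h
      exact absurd (csInf_le (hSSbb a) ⟨ht, h⟩) (not_le.mpr hlt)
    have hX4 : ∀ a ∈ G n, x ∈ a → y ∉ a → ∀ t ∈ Icc (0:ℝ) 1,
        U a < t + δ → t < U a + δ → z t ∉ (φ a).1 := by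
      intro a ha hx hy t ht h1 h2 hmem
      obtain ⟨s, hs, hslt⟩ := exists_lt_of_csInf_lt ⟨1, hSX a ha.1 hy⟩ h1
      have hd := hsep a ha t ht s hs.1 hmem hs.2
      rcases le_abs.mp hd with hc | hc
      · have := csInf_le (hSSbb a) hs
        linarith
      · linarith
    have hVle : ∀ a ∈ G n, y ∈ a → x ∉ a → V a ≤ 1 - δ := by
      intro a ha hy hx
      refine csSup_le ⟨0, hSY a ha.1 hx⟩ ?_
      intro t ht
      have := hsep a ha 1 hmem11 t ht.1 (by rw [hz1]; exact (hq a ha.1).1 hy) ht.2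
      rw [abs_of_nonneg (by linarith [ht.1.2] : (0:ℝ) ≤ 1 - t)] at this
      linarith
    have hVge0 : ∀ a ∈ 𝒢, x ∉ a → 0 ≤ V a := fun a ha hx => le_csSup (hSSba a) (hSY a ha hx)
    have hY3 : ∀ a, ∀ t ∈ Icc (0:ℝ) 1, V a < t → z t ∈ (φ a).2 := by
      intro a t ht hlt
      by_contra h
      exact absurd (le_csSup (hSSba a) ⟨ht, h⟩) (not_le.mpr hlt)
    have hY4 : ∀ a ∈ G n, y ∈ a → x ∉ a → ∀ t ∈ Icc (0:ℝ) 1,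
        V a < t + δ → t < V a + δ → z t ∉ (φ a).1 := by
      intro a ha hy hx t ht h1 h2 hmem
      obtain ⟨s, hs, hslt⟩ := exists_lt_of_lt_csSup ⟨0, hSY a ha.1 hx⟩ (by linarith : t - δ < V a)
      have hd := hsep a ha t ht s hs.1 hmem hs.2
      rcases le_abs.mp hd with hc | hc
      · linarith
      · have := le_csSup (hSSba a) hs
        linarith
    have hI3 : ∀ a ∈ G n, x ∈ a → ∀ t ∈ Icc (0:ℝ) 1, t < δ → z t ∈ (φ a).2 := by
      intro a ha hx t ht hlt
      by_contra h
      have := hsep a ha 0 hmem01 t ht (by rw [hz0]; exact (hp a ha.1).1 hx) h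
      rw [zero_sub, abs_neg, abs_of_nonneg ht.1] at this
      linarith
    have hO4 : ∀ a ∈ G n, x ∉ a → ∀ t ∈ Icc (0:ℝ) 1, t < δ → z t ∉ (φ a).1 := by
      intro a ha hx t ht hlt hmem
      have := hsep a ha t ht 0 hmem01 hmem (by rw [hz0]; exact (hp a ha.1).2 hx)
      rw [sub_zero, abs_of_nonneg ht.1] at this
      linarith
    -- the pieces
    set Gm : ℕ → Set (Set L) := fun m => {a | a ∈ G n ∧
      (((x ∈ a ↔ y ∈ a) ∧ m = 0) ∨
       (x ∈ a ∧ y ∉ a ∧ (m:ℝ)*δ < U a ∧ U a ≤ ((m:ℝ)+1)*δ) ∨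
       (y ∈ a ∧ x ∉ a ∧ (m:ℝ)*δ - δ < V a ∧ V a ≤ (m:ℝ)*δ))} with hGm
    have hGmsubG : ∀ m, Gm m ⊆ G n := fun m a ha => ha.1
    have hGmsub𝒢 : ∀ m, Gm m ⊆ 𝒢 := fun m a ha => ha.1.1
    refine ⟨Gm, ?_, ?_⟩
    · -- coverage
      apply Set.Subset.antisymm
      · exact Set.iUnion₂_subset fun m hm => hGmsubG m
      · intro a ha
        by_cases hx : x ∈ a <;> by_cases hy : y ∈ a
        · exact Set.mem_iUnion₂.mpr ⟨0, Nat.zero_le n, ha, Or.inl ⟨iff_of_true hx hy, rfl⟩⟩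
        · -- X type
          have h1 := hUge a ha hx hy
          have h2 := hUle1 a ha.1 hy
          set k := ⌈U a / δ⌉₊ with hk
          have hk1 : 1 ≤ k := Nat.one_le_ceil_iff.mpr (div_pos (lt_of_lt_of_le δpos h1) δpos)
          have hkn : k ≤ n + 1 := by
            rw [hk, Nat.ceil_le, div_le_iff₀ δpos]
            push_cast
            linarith [hδ1]
          refine Set.mem_iUnion₂.mpr ⟨k - 1, by omega, ha, Or.inr (Or.inl ⟨hx, hy, ?_, ?_⟩)⟩
          · have hcast : ((k - 1 : ℕ) : ℝ) = (k:ℝ) - 1 := by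
              rw [Nat.cast_sub hk1]; norm_num
            have hceil := Nat.ceil_lt_add_one (le_of_lt (div_pos (lt_of_lt_of_le δpos h1) δpos))
            rw [← hk] at hceil
            rw [hcast]
            have h3 : (k:ℝ) - 1 < U a / δ := by linarith
            calc ((k:ℝ) - 1) * δ < (U a / δ) * δ := mul_lt_mul_of_pos_right h3 δpos
              _ = U a := by field_simp
          · have hcast : ((k - 1 : ℕ) : ℝ) + 1 = (k:ℝ) := by
              rw [Nat.cast_sub hk1]; norm_num
            rw [hcast]
            have hceil := Nat.le_ceil (U a / δ)
            rw [← hk] at hceil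
            calc U a = (U a / δ) * δ := by field_simp
              _ ≤ (k:ℝ) * δ := mul_le_mul_of_nonneg_right hceil (le_of_lt δpos)
        · -- Y type
          have h1 := hVge0 a ha.1 hx
          have h2 := hVle a ha hy hx
          set k := ⌈V a / δ⌉₊ with hk
          have hkn : k ≤ n := by
            rw [hk, Nat.ceil_le, div_le_iff₀ δpos]
            linarith [hδ1]
          refine Set.mem_iUnion₂.mpr ⟨k, hkn, ha, Or.inr (Or.inr ⟨hy, hx, ?_, ?_⟩)⟩
          · have hceil := Nat.ceil_lt_add_one (div_nonneg h1 (le_of_lt δpos))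
            rw [← hk] at hceil
            have h3 : (k:ℝ) - 1 < V a / δ := by linarith
            calc (k:ℝ) * δ - δ = ((k:ℝ) - 1) * δ := by ring
              _ < (V a / δ) * δ := mul_lt_mul_of_pos_right h3 δpos
              _ = V a := by field_simp
          · have hceil := Nat.le_ceil (V a / δ)
            rw [← hk] at hceil
            calc V a = (V a / δ) * δ := by field_simp
              _ ≤ (k:ℝ) * δ := mul_le_mul_of_nonneg_right hceil (le_of_lt δpos)
        · exact Set.mem_iUnion₂.mpr ⟨0, Nat.zero_le n, ha, Or.inl ⟨iff_of_false hx hy, rfl⟩⟩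
    · have core : ∀ m ≤ n, ∀ F H : Set (Set L), F.Finite → H.Finite → F ⊆ Gm m → H ⊆ Gm m →
          Disjoint F H → (∀ a ∈ F, x ∈ a ∨ y ∈ a) → (∀ a ∈ H, x ∉ a ∨ y ∉ a) →
          (⋂₀ F \ ⋃₀ H).Nonempty := by
        intro m hm F H hFf hHf hFs hHs hdisj hFc hHc
        set FX : Finset (Set L) := hFf.toFinset.filter (fun a => x ∈ a ∧ y ∉ a) with hFX
        set HY : Finset (Set L) := hHf.toFinset.filter (fun a => y ∈ a ∧ x ∉ a) with hHY
        set C : Finset ℝ := insert (((m:ℝ)+1)*δ) (FX.image U ∪ HY.image (fun a => V a + δ))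
          with hC
        have hexp : ((m:ℝ)+1)*δ = (m:ℝ)*δ + δ := by ring
        have hCne : C.Nonempty := Finset.insert_nonempty _ _
        have hCgt : ∀ b ∈ C, (m:ℝ)*δ < b := by
          intro b hb
          rw [hC, Finset.mem_insert] at hb
          rcases hb with rfl | hb
          · linarith [δpos]
          · rw [Finset.mem_union] at hb
            rcases hb with hb | hb
            · rw [Finset.mem_image] at hb
              obtain ⟨a, haFX, rfl⟩ := hb
              rw [hFX, Finset.mem_filter] at haFX
              obtain ⟨haF, hxa, hya⟩ := haFX
              rw [Set.Finite.mem_toFinset] at haF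
              obtain ⟨haG, hcase⟩ := hFs haF
              rcases hcase with ⟨hiff, -⟩ | ⟨-, -, h1, -⟩ | ⟨hya', -, -, -⟩
              · exact absurd (hiff.mp hxa) hya
              · exact h1
              · exact absurd hya' hya
            · rw [Finset.mem_image] at hb
              obtain ⟨a, haHY, rfl⟩ := hb
              rw [hHY, Finset.mem_filter] at haHY
              obtain ⟨haH, hya, hxa⟩ := haHY
              rw [Set.Finite.mem_toFinset] at haH
              obtain ⟨haG, hcase⟩ := hHs haH
              rcases hcase with ⟨hiff, -⟩ | ⟨hxa', -, -, -⟩ | ⟨-, -, h1, -⟩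
              · exact absurd (hiff.mpr hya) hxa
              · exact absurd hxa' hxa
              · linarith
        set t0 := C.min' hCne with ht0
        have hlow : (m:ℝ)*δ < t0 := (Finset.lt_min'_iff C hCne).mpr hCgt
        set t : ℝ := ((m:ℝ)*δ + t0)/2 with htdef
        have htlow : (m:ℝ)*δ < t := by rw [htdef]; linarith
        have htC : ∀ b ∈ C, t < b := by
          intro b hb
          have := Finset.min'_le C b hb
          rw [htdef]; linarith [hlow, this]
        have htm1 : t < ((m:ℝ)+1)*δ := htC _ (Finset.mem_insert_self _ _)
        have htIcc : t ∈ Icc (0:ℝ) 1 := by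
          constructor
          · have : (0:ℝ) ≤ (m:ℝ)*δ := mul_nonneg (Nat.cast_nonneg m) (le_of_lt δpos)
            linarith
          · have hcast : ((m:ℝ)+1) ≤ ((n:ℝ)+1) := by
              have : (m:ℝ) ≤ (n:ℝ) := Nat.cast_le.mpr hm
              linarith
            have hmul : ((m:ℝ)+1)*δ ≤ ((n:ℝ)+1)*δ := mul_le_mul_of_nonneg_right hcast
              (le_of_lt δpos)
            linarith [hδ1]
        have hmemF : ∀ a ∈ F, z t ∈ (φ a).2 := by
          intro a haF
          obtain ⟨haG, hcase⟩ := hFs haF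
          rcases hcase with ⟨hiff, hm0⟩ | ⟨hxa, hya, h1, h2⟩ | ⟨hya, hxa, h1, h2⟩
          · subst hm0
            have htδ : t < δ := by
              have h' := htm1; norm_num at h'; exact h'
            rcases hFc a haF with hxa | hya
            · exact hI3 a haG hxa t htIcc htδ
            · exact hI3 a haG (hiff.mpr hya) t htIcc htδ
          · have hUC : U a ∈ C := by
              rw [hC]
              refine Finset.mem_insert_of_mem (Finset.mem_union_left _ ?_)
              refine Finset.mem_image_of_mem U ?_
              rw [hFX, Finset.mem_filter, Set.Finite.mem_toFinset]
              exact ⟨haF, hxa, hya⟩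
            exact hX3 a t htIcc (htC _ hUC)
          · exact hY3 a t htIcc (lt_of_le_of_lt h2 htlow)
        have hmemH : ∀ a ∈ H, z t ∉ (φ a).1 := by
          intro a haH
          obtain ⟨haG, hcase⟩ := hHs haH
          rcases hcase with ⟨hiff, hm0⟩ | ⟨hxa, hya, h1, h2⟩ | ⟨hya, hxa, h1, h2⟩
          · subst hm0
            have htδ : t < δ := by
              have h' := htm1; norm_num at h'; exact h'
            have hxa : x ∉ a := by
              rcases hHc a haH with h' | h'
              · exact h'
              · exact fun hx0 => h' (hiff.mp hx0)
            exact hO4 a haG hxa t htIcc htδ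
          · refine hX4 a haG hxa hya t htIcc ?_ ?_
            · linarith [hexp, htlow, h2]
            · linarith [hexp, htm1, h1]
          · have hVC : V a + δ ∈ C := by
              rw [hC]
              refine Finset.mem_insert_of_mem (Finset.mem_union_right _ ?_)
              refine Finset.mem_image_of_mem _ ?_
              rw [hHY, Finset.mem_filter, Set.Finite.mem_toFinset]
              exact ⟨haH, hya, hxa⟩
            refine hY4 a haG hya hxa t htIcc ?_ ?_
            · linarith [htlow, h2]
            · linarith [htC _ hVC]
        have h1 := (hiso F H hFf hHf (hFs.trans (hGmsub𝒢 m)) (hHs.trans (hGmsub𝒢 m)) hdisj).1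
        rw [Set.nonempty_iff_ne_empty]
        intro hemp
        have hweak := h1 hemp
        have hzin : z t ∈ (⋂ a ∈ F, (φ a).2) \ ⋃ a ∈ H, (φ a).1 := by
          constructor
          · exact Set.mem_iInter₂.mpr fun a haF => hmemF a haF
          · intro hmem
            obtain ⟨a, haH, hmem'⟩ := Set.mem_iUnion₂.mp hmem
            exact hmemH a haH hmem'
        rw [hweak] at hzin
        exact hzin
      intro m hm
      constructor
      · intro F H hunion hdisj hin hout
        rw [Set.nonempty_iff_ne_empty]
        intro hemp
        set Z : ↥(Gm m) → Set L := fun i => if (i : Set L) ∈ F then (i : Set L) else (↑i)ᶜ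
          with hZ
        have hZc : ∀ i, IsClosed (Z i) := by
          intro i
          have hclop := h𝒢 _ (hGmsub𝒢 m i.2)
          by_cases hi : (i : Set L) ∈ F
          · simpa [hZ, hi] using hclop.1
          · simpa [hZ, hi] using hclop.compl.1
        have hsub2 : Set.univ ∩ ⋂ i, Z i = ∅ := by
          rw [Set.univ_inter, Set.eq_empty_iff_forall_notMem]
          intro w hw
          have hwmem : w ∈ ⋂₀ F \ ⋃₀ H := by
            constructor
            · intro s hsF
              have hsGm : s ∈ Gm m := by rw [← hunion]; exact Set.mem_union_left _ hsF
              have := Set.mem_iInter.mp hw ⟨s, hsGm⟩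
              simpa [hZ, hsF] using this
            · rintro ⟨s, hsH, hws⟩
              have hsGm : s ∈ Gm m := by rw [← hunion]; exact Set.mem_union_right _ hsH
              have hsF : s ∉ F := fun hsF => Set.disjoint_left.mp hdisj hsF hsH
              have hmem := Set.mem_iInter.mp hw ⟨s, hsGm⟩
              rw [hZ] at hmem
              simp only [if_neg hsF] at hmem
              exact hmem hws
          rw [hemp] at hwmem
          exact hwmem
        obtain ⟨tt, htt⟩ := isCompact_univ.elim_finite_subfamily_closed Z hZc hsub2
        set F' : Set (Set L) := Subtype.val '' {i : ↥(Gm m) | i ∈ tt ∧ (i : Set L) ∈ F} with hF'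
        set H' : Set (Set L) := Subtype.val '' {i : ↥(Gm m) | i ∈ tt ∧ (i : Set L) ∉ F} with hH'
        have hF'f : F'.Finite := (tt.finite_toSet.subset (fun i hi => hi.1)).image _
        have hH'f : H'.Finite := (tt.finite_toSet.subset (fun i hi => hi.1)).image _
        have hF's : F' ⊆ Gm m := by rintro s ⟨i, -, rfl⟩; exact i.2
        have hH's : H' ⊆ Gm m := by rintro s ⟨i, -, rfl⟩; exact i.2
        have hF'F : F' ⊆ F := by rintro s ⟨i, hi, rfl⟩; exact hi.2
        have hH'H : H' ⊆ H := by
          rintro s ⟨i, hi, rfl⟩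
          have hiFH : (i : Set L) ∈ F ∪ H := by rw [hunion]; exact i.2
          rcases hiFH with h' | h'
          · exact absurd h' hi.2
          · exact h'
        have hdisj' : Disjoint F' H' := by
          rw [Set.disjoint_left]
          rintro s ⟨i, hi, rfl⟩ ⟨j, hj, hji⟩
          exact hj.2 (by rw [hji]; exact hi.2)
        have hF'c : ∀ a ∈ F', x ∈ a ∨ y ∈ a := by
          intro a haF'
          by_contra hcon
          push_neg at hcon
          have : a ∈ H := hout ⟨hF's haF', hcon.1, hcon.2⟩
          exact Set.disjoint_left.mp hdisj (hF'F haF') this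
        have hH'c : ∀ a ∈ H', x ∉ a ∨ y ∉ a := by
          intro a haH'
          by_contra hcon
          push_neg at hcon
          have : a ∈ F := hin ⟨hH's haH', hcon.1, hcon.2⟩
          exact Set.disjoint_left.mp hdisj this (hH'H haH')
        obtain ⟨w, hw1, hw2⟩ := core m hm F' H' hF'f hH'f hF's hH's hdisj' hF'c hH'c
        have hwZ : w ∈ Set.univ ∩ ⋂ i ∈ tt, Z i := by
          refine ⟨trivial, Set.mem_iInter₂.mpr ?_⟩
          intro i hit
          by_cases hi : (i : Set L) ∈ F
          · have hiF' : (i : Set L) ∈ F' := ⟨i, ⟨hit, hi⟩, rfl⟩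
            rw [hZ]
            simp only [if_pos hi]
            exact Set.mem_sInter.mp hw1 _ hiF'
          · have hiH' : (i : Set L) ∈ H' := ⟨i, ⟨hit, hi⟩, rfl⟩
            rw [hZ]
            simp only [if_neg hi]
            intro hmem
            exact hw2 (Set.mem_sUnion.mpr ⟨_, hiH', hmem⟩)
        rw [htt] at hwZ
        exact hwZ
      · intro F H hFf hHf hFs hHs hdisj
        refine core m hm F H hFf hHf (fun a ha => (hFs ha).1) (fun a ha => (hHs ha).1)
          hdisj ?_ ?_
        · intro a haF
          rcases (hFs haF).2 with ⟨hx', -⟩ | ⟨hy', -⟩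
          · exact Or.inl hx'
          · exact Or.inr hy'
        · intro a haH
          rcases (hHs haH).2 with ⟨-, hy'⟩ | ⟨-, hx'⟩
          · exact Or.inr hy'
          · exact Or.inl hx'
end

section
/- Let T be a tree admitting a decomposition T = ⋃_{n<ω} Tₙ into countably many subsets such that, for every n, Tₙ contains no infinite chain. Then T is special, i.e., T is the union of countably many antichains. -/
open Set

/-- If a tree `T` (a partial order with a least element whose
initial segments `{s | s < t}` are well ordered) is a countable union of sets
containing no infinite chain, then `T` is special, i.e. a countable union of
antichains. -/
theorem special_of_countable_union_no_infinite_chain {T : Type*}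
    [PartialOrder T] [OrderBot T]
    (htree : ∀ t : T, IsChain (· ≤ ·) {s | s < t} ∧ Set.IsWF {s | s < t})
    (Tn : ℕ → Set T) (hcover : (⋃ n, Tn n) = Set.univ)
    (hnochain : ∀ n, ∀ c ⊆ Tn n, IsChain (· ≤ ·) c → c.Finite) :
    ∃ A : ℕ → Set T, (⋃ n, A n) = Set.univ ∧ ∀ n, IsAntichain (· ≤ ·) (A n) := by
  classical
  refine ⟨fun m => {t | t ∈ Tn (Nat.unpair m).1 ∧
      ({s | s ∈ Tn (Nat.unpair m).1 ∧ s < t}).ncard = (Nat.unpair m).2}, ?_, ?_⟩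
  · apply Set.eq_univ_of_forall
    intro t
    have ht : t ∈ ⋃ n, Tn n := by rw [hcover]; trivial
    obtain ⟨n, hn⟩ := Set.mem_iUnion.1 ht
    refine Set.mem_iUnion.2 ⟨Nat.pair n (({s | s ∈ Tn n ∧ s < t}).ncard), ?_⟩
    simp only [Nat.unpair_pair, Set.mem_setOf_eq]
    exact ⟨hn, trivial⟩
  · intro m a ha b hb hab hle
    set n := (Nat.unpair m).1 with hn
    have hfin : ({s | s ∈ Tn n ∧ s < b}).Finite :=
      hnochain n _ (fun s hs => hs.1) ((htree b).1.mono (fun s hs => hs.2))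
    have hlt : a < b := lt_of_le_of_ne hle hab
    have hsub : {s | s ∈ Tn n ∧ s < a} ⊂ {s | s ∈ Tn n ∧ s < b} := by
      refine ⟨fun s hs => ⟨hs.1, hs.2.trans hlt⟩, fun h => ?_⟩
      exact lt_irrefl a (h ⟨ha.1, hlt⟩).2
    have := Set.ncard_lt_ncard hsub hfin
    rw [ha.2, hb.2] at this
    exact lt_irrefl _ this
end
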